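/- Let f : ℝⁿ → ℝ be convex and W ∈ ℝ^{n×n} symmetric positive definite. If ξ : ℝⁿ → ℝⁿ is a function satisfying ξ(x) ∈ ∂f(x − Wξ(x)) for every x, then ξ is continuous. -/

import Mathlib

open Matrix
open scoped RealInnerProductSpace

theorem stmt_3 {n : ℕ} (f : EuclideanSpace ℝ (Fin n) → ℝ)
    (hf : ConvexOn ℝ Set.univ f)
    (W : Matrix (Fin n) (Fin n) ℝ) (hW : W.PosDef)
    (ξ : EuclideanSpace ℝ (Fin n) → EuclideanSpace ℝ (Fin n))
    (hξ : ∀ x z : EuclideanSpace ℝ (Fin n),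
      f z - f (x - W.toEuclideanLin (ξ x)) ≥
        ⟪ξ x, z - (x - W.toEuclideanLin (ξ x))⟫) :
    Continuous ξ := by
  have hpos : ∀ u : EuclideanSpace ℝ (Fin n), u ≠ 0 →
      0 < ⟪u, W.toEuclideanLin u⟫ := by
    intro u hu
    have h := hW.re_dotProduct_pos (x := (WithLp.equiv 2 (Fin n → ℝ)) u)
      (by simpa using hu)
    simpa [EuclideanSpace.inner_eq_star_dotProduct, Matrix.toEuclideanLin_apply, dotProduct_comm] using h
  rcases Nat.eq_zero_or_pos n with hn | hn
  · subst hn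
    have : ξ = fun _ => ξ 0 := funext fun x => by
      exact congrArg ξ (Subsingleton.elim x 0)
    rw [this]; exact continuous_const
  · haveI : Nonempty (Fin n) := ⟨⟨0, hn⟩⟩
    obtain ⟨u0, hu0S, hmin⟩ :=
      (isCompact_sphere (0 : EuclideanSpace ℝ (Fin n)) 1).exists_isMinOn
        (NormedSpace.sphere_nonempty.mpr zero_le_one)
        ((show Continuous fun t : EuclideanSpace ℝ (Fin n) => ⟪t, W.toEuclideanLin t⟫ from
          continuous_id.inner (W.toEuclideanLin.continuous_of_finiteDimensional)).continuousOn)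
    set c : ℝ := ⟪u0, W.toEuclideanLin u0⟫ with hc
    have hu0 : u0 ≠ 0 := by
      have : ‖u0‖ = 1 := by simpa using hu0S
      intro h; rw [h, norm_zero] at this; norm_num at this
    have hc0 : 0 < c := hpos u0 hu0
    have hbound : ∀ u : EuclideanSpace ℝ (Fin n),
        c * ‖u‖ ^ 2 ≤ ⟪u, W.toEuclideanLin u⟫ := by
      intro u
      rcases eq_or_ne u 0 with rfl | hu
      · simp
      · have hnu : (0 : ℝ) < ‖u‖ := norm_pos_iff.mpr hu
        set v : EuclideanSpace ℝ (Fin n) := ‖u‖⁻¹ • u with hv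
        have hvS : v ∈ Metric.sphere (0 : EuclideanSpace ℝ (Fin n)) 1 := by
          simp [hv, norm_smul, abs_of_pos (inv_pos.mpr hnu), inv_mul_cancel₀ hnu.ne']
        have h1 : c ≤ ⟪v, W.toEuclideanLin v⟫ := isMinOn_iff.mp hmin v hvS
        have h2 : ⟪v, W.toEuclideanLin v⟫ = ‖u‖⁻¹ * (‖u‖⁻¹ * ⟪u, W.toEuclideanLin u⟫) := by
          rw [hv, LinearMap.map_smul, real_inner_smul_left, real_inner_smul_right]
        rw [h2] at h1
        have := mul_le_mul_of_nonneg_left h1 (le_of_lt (mul_pos hnu hnu))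
        calc c * ‖u‖ ^ 2 = ‖u‖ * ‖u‖ * c := by ring
          _ ≤ ‖u‖ * ‖u‖ * (‖u‖⁻¹ * (‖u‖⁻¹ * ⟪u, W.toEuclideanLin u⟫)) := this
          _ = ⟪u, W.toEuclideanLin u⟫ := by
              field_simp
    have hlip : ∀ x x' : EuclideanSpace ℝ (Fin n),
        ‖ξ x - ξ x'‖ ≤ c⁻¹ * ‖x - x'‖ := by
      intro x x'
      set u : EuclideanSpace ℝ (Fin n) := ξ x - ξ x' with hu
      have h1 := hξ x (x' - W.toEuclideanLin (ξ x'))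
      have h2 := hξ x' (x - W.toEuclideanLin (ξ x))
      have hsum : 0 ≥ ⟪ξ x, (x' - W.toEuclideanLin (ξ x')) - (x - W.toEuclideanLin (ξ x))⟫
          + ⟪ξ x', (x - W.toEuclideanLin (ξ x)) - (x' - W.toEuclideanLin (ξ x'))⟫ := by
        linarith
      have hkey : ⟪u, W.toEuclideanLin u⟫ ≤ ⟪u, x - x'⟫ := by
        have expand : ⟪ξ x, (x' - W.toEuclideanLin (ξ x')) - (x - W.toEuclideanLin (ξ x))⟫
            + ⟪ξ x', (x - W.toEuclideanLin (ξ x)) - (x' - W.toEuclideanLin (ξ x'))⟫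
            = ⟪u, x' - x⟫ + ⟪u, W.toEuclideanLin u⟫ := by
          simp only [hu, map_sub, inner_sub_left, inner_sub_right]
          ring
        rw [expand] at hsum
        have : ⟪u, x' - x⟫ = -⟪u, x - x'⟫ := by
          rw [← inner_neg_right]; congr 1; abel
        linarith [hsum, this.symm ▸ hsum]
      rcases eq_or_ne u 0 with h0 | h0
      · rw [h0, norm_zero]
        positivity
      · have hnu : (0 : ℝ) < ‖u‖ := norm_pos_iff.mpr h0
        have h3 : c * ‖u‖ ^ 2 ≤ ‖u‖ * ‖x - x'‖ :=
          le_trans (hbound u) (le_trans hkey (real_inner_le_norm u (x - x')))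
        have h4 : c * ‖u‖ ≤ ‖x - x'‖ := by
          have := (mul_le_mul_iff_of_pos_right hnu).mp (by nlinarith : c * ‖u‖ * ‖u‖ ≤ ‖x - x'‖ * ‖u‖)
          exact this
        have h5 : ‖u‖ ≤ ‖x - x'‖ / c := (le_div_iff₀ hc0).mpr (by linarith)
        rw [div_eq_inv_mul] at h5
        exact h5
    have : LipschitzWith (Real.toNNReal c⁻¹) ξ := by
      apply LipschitzWith.of_dist_le_mul
      intro x x'
      rw [dist_eq_norm, dist_eq_norm]
      calc ‖ξ x - ξ x'‖ ≤ c⁻¹ * ‖x - x'‖ := hlip x x'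
        _ = (Real.toNNReal c⁻¹ : ℝ) * ‖x - x'‖ := by
            rw [Real.coe_toNNReal _ (le_of_lt (inv_pos.mpr hc0))]
    exact this.continuous
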